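/- ζ(3) = (5/2) ∑_{n≥1} (−1)^{n−1} / (n³ C(2n,n)). -/

import Mathlib

open Finset Filter Nat

namespace Zeta3Markov

noncomputable def Fa (m j : ℕ) : ℝ :=
  if j < m then (-1)^j * ((j+1)! : ℝ)^2 * ((m-1-j)! : ℝ) / (((j:ℝ)+1)^2 * ((m+j+2)! : ℝ))
  else 0

noncomputable def Gr (m k : ℕ) : ℝ :=
  (-1)^(k+1) * ((k ! : ℕ) : ℝ)^2 * ((m-k)! : ℝ) / (((m:ℝ)+1)^2 * ((m+1+k)! : ℝ))

noncomputable def bS (n : ℕ) : ℝ :=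
  (-1)^n / (((n:ℝ)+1)^3 * ((2*(n+1)).choose (n+1) : ℝ))

lemma choose_cast (n : ℕ) :
    (((2*(n+1)).choose (n+1) : ℕ) : ℝ) * ((n+1)! : ℝ) * ((n+1)! : ℝ) = ((2*(n+1))! : ℝ) := by
  have h : (2*(n+1)).choose (n+1) * (n+1)! * (2*(n+1)-(n+1))! = (2*(n+1))! :=
    Nat.choose_mul_factorial_mul_factorial (by omega)
  have h2 : 2*(n+1)-(n+1) = n+1 := by omega
  rw [h2] at h
  exact_mod_cast h

lemma choose_pos (n : ℕ) : (0:ℝ) < (((2*(n+1)).choose (n+1) : ℕ) : ℝ) := by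
  exact_mod_cast Nat.choose_pos (by omega : n+1 ≤ 2*(n+1))

lemma Gr_zero (m : ℕ) : Gr m 0 = -(1 / ((m:ℝ)+1)^3) := by
  unfold Gr
  simp only [Nat.sub_zero, Nat.add_zero, Nat.factorial_zero]
  have h : (m+1)! = (m+1) * m ! := Nat.factorial_succ m
  rw [h]
  have h1 : ((m:ℝ)+1) ≠ 0 := by positivity
  have h2 : ((m ! : ℕ):ℝ) ≠ 0 := by exact_mod_cast (Nat.factorial_pos _).ne'
  push_cast
  field_simp

lemma Gr_top (m : ℕ) : Gr m m = -2 * bS m := by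
  unfold Gr bS
  have h1 : m - m = 0 := by omega
  have h2 : m+1+m = 2*m+1 := by omega
  have h3 : (2*(m+1)) = (2*m+1)+1 := by omega
  have hc := choose_cast m
  have hcp := choose_pos m
  rw [h3] at hc hcp ⊢
  rw [h1, h2, Nat.factorial_zero]
  rw [Nat.factorial_succ (2*m+1), Nat.factorial_succ m] at hc
  have h4 : ((m:ℝ)+1) ≠ 0 := by positivity
  have h5 : ((m ! : ℕ):ℝ) ≠ 0 := by exact_mod_cast (Nat.factorial_pos _).ne'
  have h6 : (((2*m+1)! : ℕ):ℝ) ≠ 0 := by exact_mod_cast (Nat.factorial_pos _).ne'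
  push_cast at hc ⊢
  field_simp
  have hc' : (((2*m+1+1).choose (m+1) : ℕ):ℝ) * ((m:ℝ)+1) * ((m ! : ℕ):ℝ)^2 = 2 * (((2*m+1)! : ℕ):ℝ) :=
    mul_left_cancel₀ h4 (by linear_combination hc)
  linear_combination (-((-1:ℝ))^m) * hc'

lemma step (j d : ℕ) : Fa (j+1+d) j = Gr (j+1+d) (j+1) - Gr (j+1+d) j := by
  unfold Fa Gr
  rw [if_pos (by omega : j < j+1+d)]
  have h1 : j+1+d-1-j = d := by omega
  have h2 : j+1+d-(j+1) = d := by omega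
  have h3 : j+1+d-j = d+1 := by omega
  have h4 : j+1+d+j+2 = (2*j+d+2)+1 := by omega
  have h5 : j+1+d+1+(j+1) = (2*j+d+2)+1 := by omega
  have h6 : j+1+d+1+j = 2*j+d+2 := by omega
  rw [h1, h2, h3, h4, h5, h6, Nat.factorial_succ (2*j+d+2), Nat.factorial_succ d,
    Nat.factorial_succ j]
  have hj : ((j:ℝ)+1) ≠ 0 := by positivity
  have hm : (((j+1+d : ℕ):ℝ)+1) ≠ 0 := by positivity
  have hf1 : ((2*j+d+2)! : ℝ) ≠ 0 := by exact_mod_cast (Nat.factorial_pos _).ne'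
  have hT : ((2*j+d+2 : ℕ):ℝ) + 1 ≠ 0 := by positivity
  push_cast
  field_simp
  ring

lemma row (m : ℕ) : ∑ j ∈ range m, Fa m j = 1/((m:ℝ)+1)^3 - 2 * bS m := by
  have h : ∑ j ∈ range m, Fa m j = ∑ j ∈ range m, (Gr m (j+1) - Gr m j) := by
    refine Finset.sum_congr rfl fun j hj => ?_
    have hjm : j < m := Finset.mem_range.mp hj
    obtain ⟨d, rfl⟩ : ∃ d, m = j+1+d := ⟨m-(j+1), by omega⟩
    exact step j d
  rw [h, Finset.sum_range_sub (Gr m), Gr_top, Gr_zero]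
  ring

lemma Fa_zero_of_le {m j : ℕ} (h : m ≤ j) : Fa m j = 0 := by
  simp [Fa, Nat.not_lt.mpr h]

lemma row_summable (m : ℕ) : Summable (fun j => Fa m j) :=
  summable_of_ne_finset_zero (s := range m)
    (fun j hj => Fa_zero_of_le (by simpa using Nat.le_of_not_lt (fun h => hj (Finset.mem_range.mpr h))))

lemma row_tsum (m : ℕ) : ∑' j, Fa m j = 1/((m:ℝ)+1)^3 - 2 * bS m := by
  rw [tsum_eq_sum (s := range m)
    (fun j hj => Fa_zero_of_le (Nat.le_of_not_lt (fun h => hj (Finset.mem_range.mpr h))))]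
  exact row m

/-! Telescoping -/

lemma hasSum_tele (f : ℕ → ℝ) (hpos : ∀ n, 0 ≤ f n) (hdec : ∀ n, f (n+1) ≤ f n)
    (h0 : Tendsto f atTop (nhds 0)) : HasSum (fun n => f n - f (n+1)) (f 0) := by
  have hsum : Summable (fun n => f n - f (n+1)) := by
    apply summable_of_sum_range_le (c := f 0) (fun n => sub_nonneg.2 (hdec n))
    intro n
    rw [Finset.sum_range_sub' f]
    have := hpos n
    linarith
  rw [hsum.hasSum_iff_tendsto_nat]
  simp only [Finset.sum_range_sub' f]
  simpa using tendsto_const_nhds.sub h0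

noncomputable def Hf (c d : ℕ) : ℝ := (d ! : ℝ) / ((d + c)! : ℝ)

lemma Hf_pos (c d : ℕ) : 0 < Hf c d := by
  unfold Hf
  have h1 : (0:ℝ) < (d ! : ℝ) := by exact_mod_cast Nat.factorial_pos d
  have h2 : (0:ℝ) < ((d+c)! : ℝ) := by exact_mod_cast Nat.factorial_pos (d+c)
  positivity

lemma Hf_dec (c d : ℕ) : Hf c (d+1) ≤ Hf c d := by
  unfold Hf
  rw [div_le_div_iff₀ (by exact_mod_cast Nat.factorial_pos _) (by exact_mod_cast Nat.factorial_pos _)]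
  have h : (d+1)! * (d+c)! ≤ d ! * (d+1+c)! := by
    have e1 : (d+1)! = (d+1) * d ! := Nat.factorial_succ d
    have e2 : (d+1+c) = (d+c)+1 := by omega
    rw [e1, e2, Nat.factorial_succ (d+c)]
    have hle : (d+1) ≤ (d+c+1) := by omega
    calc (d+1) * d ! * (d+c)! ≤ (d+c+1) * d ! * (d+c)! := by
          exact Nat.mul_le_mul_right _ (Nat.mul_le_mul_right _ hle)
      _ = d ! * ((d+c+1) * (d+c)!) := by ring
  exact_mod_cast h

lemma Hf_le (c d : ℕ) (hc : 1 ≤ c) : Hf c d ≤ 1/((d:ℝ)+1) := by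
  unfold Hf
  have h1 : (d+1)! ≤ (d+c)! := Nat.factorial_le (by omega)
  have h2 : (0:ℝ) < ((d+c)! : ℝ) := by exact_mod_cast Nat.factorial_pos _
  have h3 : (0:ℝ) < ((d:ℝ)+1) := by positivity
  rw [div_le_div_iff₀ h2 h3]
  have key : ((d:ℝ)+1) * (d ! : ℝ) = ((d+1)! : ℝ) := by
    rw [Nat.factorial_succ]; push_cast; ring
  calc (d ! :ℝ) * ((d:ℝ)+1) = ((d+1)! : ℝ) := by rw [← key]; ring
    _ ≤ ((d+c)! : ℝ) := by exact_mod_cast h1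
    _ = 1 * ((d+c)! : ℝ) := by ring

lemma Hf_tendsto (c : ℕ) (hc : 1 ≤ c) : Tendsto (Hf c) atTop (nhds 0) := by
  apply squeeze_zero (fun d => (Hf_pos c d).le) (fun d => Hf_le c d hc)
  exact tendsto_one_div_add_atTop_nhds_zero_nat

lemma hasSum_Hf (c : ℕ) (hc : 1 ≤ c) :
    HasSum (fun d => Hf c d - Hf c (d+1)) (1 / (c ! : ℝ)) := by
  have h := hasSum_tele (Hf c) (fun d => (Hf_pos c d).le) (Hf_dec c) (Hf_tendsto c hc)
  have h0 : Hf c 0 = 1 / (c ! : ℝ) := by unfold Hf; simp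
  rwa [h0] at h

noncomputable def cst (j : ℕ) : ℝ :=
  (-1)^j * ((j+1)! : ℝ)^2 / (((j:ℝ)+1)^2 * (2*(j:ℝ)+2))

lemma col_term (j d : ℕ) :
    Fa (d + (j+1)) j = cst j * (Hf (2*j+2) d - Hf (2*j+2) (d+1)) := by
  unfold Fa cst Hf
  rw [if_pos (by omega : j < d + (j+1))]
  have h1 : d+(j+1)-1-j = d := by omega
  have h2 : d+(j+1)+j+2 = (d+(2*j+2))+1 := by omega
  have h3 : d+1+(2*j+2) = (d+(2*j+2))+1 := by omega
  rw [h1, h2, h3, Nat.factorial_succ (d+(2*j+2)), Nat.factorial_succ d]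
  have hj : ((j:ℝ)+1) ≠ 0 := by positivity
  have hf1 : ((d+(2*j+2))! : ℝ) ≠ 0 := by exact_mod_cast (Nat.factorial_pos _).ne'
  have hf2 : ((d:ℕ)! : ℝ) ≠ 0 := by exact_mod_cast (Nat.factorial_pos _).ne'
  have hT : ((d+(2*j+2) : ℕ):ℝ) + 1 ≠ 0 := by positivity
  push_cast
  field_simp
  ring

lemma col_val (j : ℕ) : cst j * (1 / ((2*j+2)! : ℝ)) = bS j / 2 := by
  unfold cst bS
  have hc := choose_cast j
  have h2 : 2*(j+1) = 2*j+2 := by omega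
  rw [h2] at hc
  have hcp : (0:ℝ) < (((2*(j+1)).choose (j+1) : ℕ) : ℝ) := choose_pos j
  rw [h2] at hcp
  rw [h2]
  have hj : ((j:ℝ)+1) ≠ 0 := by positivity
  have hf1 : (((2*j+2)! : ℕ) : ℝ) ≠ 0 := by exact_mod_cast (Nat.factorial_pos _).ne'
  have hf2 : (((j+1)! : ℕ) : ℝ) ≠ 0 := by exact_mod_cast (Nat.factorial_pos _).ne'
  field_simp
  linear_combination hc

lemma col_hasSum (j : ℕ) : HasSum (fun m => Fa m j) (bS j / 2) := by
  have h1 : HasSum (fun d => Fa (d + (j+1)) j) (bS j / 2) := by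
    have h := (hasSum_Hf (2*j+2) (by omega)).mul_left (cst j)
    rw [col_val j] at h
    exact h.congr_fun fun d => col_term j d
  have h2 := (hasSum_nat_add_iff (f := fun m => Fa m j) (j+1)).mp h1
  have h3 : ∑ i ∈ range (j+1), Fa i j = 0 := by
    apply Finset.sum_eq_zero
    intro i hi
    exact Fa_zero_of_le (by have := Finset.mem_range.mp hi; omega)
  rwa [h3, add_zero] at h2

/-! Absolute values and summability on the product -/

lemma abs_Fa (m j : ℕ) : |Fa m j| = (-1)^j * Fa m j := by
  unfold Fa
  split_ifs with h
  · have hr : (0:ℝ) ≤ ((j+1)! : ℝ)^2 * ((m-1-j)! : ℝ) / (((j:ℝ)+1)^2 * ((m+j+2)! : ℝ)) := by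
      positivity
    have e : (-1:ℝ)^j * ((j+1)! : ℝ)^2 * ((m-1-j)! : ℝ) / (((j:ℝ)+1)^2 * ((m+j+2)! : ℝ))
        = (-1:ℝ)^j * (((j+1)! : ℝ)^2 * ((m-1-j)! : ℝ) / (((j:ℝ)+1)^2 * ((m+j+2)! : ℝ))) := by
      ring
    rw [e, abs_mul, abs_pow, abs_neg, abs_one, one_pow, one_mul, abs_of_nonneg hr,
      ← mul_assoc, ← mul_pow]
    norm_num
  · simp

lemma colabs_hasSum (j : ℕ) :
    HasSum (fun m => |Fa m j|) ((-1)^j * (bS j / 2)) :=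
  ((col_hasSum j).mul_left ((-1)^j)).congr_fun fun m => abs_Fa m j

lemma colabs_le (j : ℕ) : (-1:ℝ)^j * (bS j / 2) ≤ 1/((j:ℝ)+1)^2 := by
  unfold bS
  have hcp := choose_pos j
  have hc1 : (1:ℝ) ≤ (((2*(j+1)).choose (j+1) : ℕ) : ℝ) := by
    exact_mod_cast Nat.one_le_iff_ne_zero.mpr (Nat.choose_pos (by omega : j+1 ≤ 2*(j+1))).ne'
  have hj : (0:ℝ) < ((j:ℝ)+1) := by positivity
  have hsq : (-1:ℝ)^j * (-1:ℝ)^j = 1 := by rw [← mul_pow]; norm_num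
  have e : (-1:ℝ)^j * ((-1:ℝ)^j / (((j:ℝ)+1)^3 * (((2*(j+1)).choose (j+1) : ℕ) : ℝ)) / 2)
      = 1 / (2 * ((j:ℝ)+1)^3 * (((2*(j+1)).choose (j+1) : ℕ) : ℝ)) := by
    rw [div_div, ← mul_div_assoc, hsq]
    ring
  rw [e]
  rw [div_le_div_iff₀ (by positivity) (by positivity)]
  have h1 : ((j:ℝ)+1)^2 ≤ ((j:ℝ)+1)^3 := by nlinarith
  nlinarith [hcp, hc1, sq_nonneg ((j:ℝ)+1)]

lemma summable_inv_sq : Summable (fun j : ℕ => 1/((j:ℝ)+1)^2) := by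
  have h := Real.summable_one_div_nat_pow.mpr (by norm_num : 1 < 2)
  have h2 := (summable_nat_add_iff 1).mpr h
  refine h2.congr fun j => ?_
  push_cast
  ring

lemma colabs_nonneg (j : ℕ) : (0:ℝ) ≤ (-1:ℝ)^j * (bS j / 2) :=
  (colabs_hasSum j).nonneg (fun m => abs_nonneg _)

lemma summable_colabs : Summable (fun j => (-1:ℝ)^j * (bS j / 2)) :=
  Summable.of_nonneg_of_le colabs_nonneg colabs_le summable_inv_sq

lemma summable_bS : Summable bS := by
  apply summable_abs_iff.mp
  have h : (fun j => |bS j|) = fun j => ((-1:ℝ)^j * (bS j / 2)) * 2 := by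
    funext j
    have := colabs_nonneg j
    have habs : |bS j| = (-1:ℝ)^j * bS j := by
      rcases Nat.even_or_odd j with he | ho
      · rw [he.neg_one_pow] at this ⊢
        rw [one_mul]; exact abs_of_nonneg (by linarith)
      · rw [ho.neg_one_pow] at this ⊢
        rw [neg_one_mul]; exact abs_of_nonpos (by linarith)
    rw [habs]; ring
  rw [h]
  exact summable_colabs.mul_right 2

lemma summable_prod_abs : Summable (fun p : ℕ × ℕ => |Fa p.2 p.1|) := by
  rw [summable_prod_of_nonneg (fun p => abs_nonneg _)]
  refine ⟨fun j => (colabs_hasSum j).summable, ?_⟩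
  refine Summable.congr summable_colabs fun j => ?_
  exact ((colabs_hasSum j).tsum_eq).symm

lemma summable_uncurry : Summable (Function.uncurry Fa) := by
  have h1 : Summable (fun p : ℕ × ℕ => Fa p.2 p.1) := summable_abs_iff.mp summable_prod_abs
  have h2 := h1.prod_symm
  exact h2.congr fun p => rfl

lemma summable_a : Summable (fun m : ℕ => 1/((m:ℝ)+1)^3) := by
  refine Summable.of_nonneg_of_le (fun m => by positivity) (fun m => ?_) summable_inv_sq
  have hj : (0:ℝ) < ((m:ℝ)+1) := by positivity
  rw [div_le_div_iff₀ (by positivity) (by positivity)]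
  nlinarith

theorem main :
    (∑' k : ℕ, (1 : ℝ) / ((k : ℝ) + 1) ^ 3) =
      (5 / 2) * ∑' n : ℕ, (-1 : ℝ) ^ n /
        (((n : ℝ) + 1) ^ 3 * ((2 * (n + 1)).choose (n + 1) : ℝ)) := by
  have key := Summable.tsum_comm' summable_uncurry row_summable (fun j => (col_hasSum j).summable)
  have hL : ∑' (c : ℕ) (b : ℕ), Fa b c = (∑' j, bS j) / 2 := by
    rw [tsum_congr (fun j => (col_hasSum j).tsum_eq)]
    exact tsum_div_const
  have hR : ∑' (b : ℕ) (c : ℕ), Fa b c = (∑' m : ℕ, 1/((m:ℝ)+1)^3) - 2 * (∑' m : ℕ, bS m) := by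
    rw [tsum_congr row_tsum]
    rw [Summable.tsum_sub summable_a (summable_bS.mul_left 2)]
    congr 1
    exact tsum_mul_left
  rw [hL, hR] at key
  have hb : ∑' n : ℕ, (-1 : ℝ) ^ n /
      (((n : ℝ) + 1) ^ 3 * ((2 * (n + 1)).choose (n + 1) : ℝ)) = ∑' j, bS j := rfl
  rw [hb]
  linarith [key]

end Zeta3Markov

theorem zeta3_markov_series :
    (∑' k : ℕ, (1 : ℝ) / ((k : ℝ) + 1) ^ 3) =
      (5 / 2) * ∑' n : ℕ, (-1 : ℝ) ^ n /
        (((n : ℝ) + 1) ^ 3 * ((2 * (n + 1)).choose (n + 1) : ℝ)) := by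
  exact Zeta3Markov.main
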